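/- Let S be a numerical semigroup on a compound sequence, n ∈ S, and x, y two factorizations of n. Then there is a chain of factorizations x = x^0, x^1, ..., x^k = y of n such that each consecutive pair differs by a basic swap, i.e., x^{j+1} is obtained from x^j by replacing a_i copies of n_i with b_i copies of n_{i-1} or vice versa, for some i. -/

import Mathlib

open Finset Relation

def Rsw (p : ℕ) (a b : ℕ → ℕ) : (ℕ → ℕ) → (ℕ → ℕ) → Prop :=
  fun u v => ∃ i, 1 ≤ i ∧ i ≤ p ∧
      ((fun j => u j + if j = i - 1 then b i else 0) =
        (fun j => v j + if j = i then a i else 0) ∨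
       (fun j => u j + if j = i then a i else 0) =
        (fun j => v j + if j = i - 1 then b i else 0))

def Mf (p : ℕ) (a b : ℕ → ℕ) (t j : ℕ) : ℕ :=
  (∏ k ∈ Icc (t+1) j, b k) * ∏ k ∈ Icc (j+1) p, a k

lemma Rsw_symm (p : ℕ) (a b : ℕ → ℕ) : Symmetric (Rsw p a b) := by
  rintro u v ⟨i, h1, h2, h3 | h3⟩
  exacts [⟨i, h1, h2, Or.inr h3.symm⟩, ⟨i, h1, h2, Or.inl h3.symm⟩]

lemma swapChain (p : ℕ) (a b : ℕ → ℕ) (i : ℕ) (hi1 : 1 ≤ i) (hip : i ≤ p)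
    (x : ℕ → ℕ) : ∀ q : ℕ, q * b i ≤ x (i - 1) →
    ReflTransGen (Rsw p a b) x
      (fun j => if j = i - 1 then x j - q * b i else if j = i then x j + q * a i else x j) := by
  intro q
  induction q with
  | zero =>
      intro _
      have h : (fun j => if j = i - 1 then x j - 0 * b i else
          if j = i then x j + 0 * a i else x j) = x := by
        funext j; split_ifs <;> simp
      rw [h]
  | succ q ih =>
      intro hq
      have e : (q + 1) * b i = q * b i + b i := by ring
      have ea : (q + 1) * a i = q * a i + a i := by ring
      rw [e] at hq
      have hble : q * b i ≤ x (i - 1) := by omega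
      refine ReflTransGen.tail (ih hble) ⟨i, hi1, hip, Or.inr ?_⟩
      have hne : i - 1 ≠ i := by omega
      funext j
      rcases eq_or_ne j (i - 1) with h1 | h1
      · subst h1
        simp only [e, ea]
        split_ifs <;> omega
      · rcases eq_or_ne j i with h2 | h2
        · subst h2
          simp only [e, ea]
          split_ifs <;> omega
        · simp [h1, h2]

lemma descend (p : ℕ) (a b : ℕ → ℕ)
    (ha : ∀ i, 1 ≤ i → i ≤ p → 2 ≤ a i ∧ a i < b i)
    (hab : ∀ i j, 1 ≤ j → j ≤ i → i ≤ p → Nat.gcd (a i) (b j) = 1)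
    (t : ℕ) (ht : t < p) (x y : ℕ → ℕ) (hle : y t ≤ x t)
    (hsum : ∑ j ∈ Icc t p, x j * Mf p a b t j = ∑ j ∈ Icc t p, y j * Mf p a b t j) :
    ∃ x', ReflTransGen (Rsw p a b) x x' ∧ x' t = y t ∧
      (∀ j, j ≠ t → j ≠ t + 1 → x' j = x j) ∧
      ∑ j ∈ Icc (t+1) p, x' j * Mf p a b (t+1) j
        = ∑ j ∈ Icc (t+1) p, y j * Mf p a b (t+1) j := by
  set B := b (t+1) with hB
  set A := Mf p a b t t with hA
  have hBpos : 0 < B := by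
    have := ha (t+1) (by omega) (by omega); omega
  have hsplit : ∀ z : ℕ → ℕ, ∑ j ∈ Icc t p, z j * Mf p a b t j
      = z t * A + ∑ j ∈ Icc (t+1) p, z j * Mf p a b t j := by
    intro z
    rw [← Finset.Ico_add_one_right_eq_Icc, Finset.sum_eq_sum_Ico_succ_bot (by omega : t < p + 1),
      Finset.Ico_add_one_right_eq_Icc]
  have hM : ∀ j ∈ Icc (t+1) p, Mf p a b t j = B * Mf p a b (t+1) j := by
    intro j hj
    rw [mem_Icc] at hj
    unfold Mf
    rw [← Finset.Ico_add_one_right_eq_Icc (t+1) j, Finset.prod_eq_prod_Ico_succ_bot (by omega : t + 1 < j + 1),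
      Finset.Ico_add_one_right_eq_Icc]
    ring
  have key2 : a (t+1) * Mf p a b (t+1) (t+1) = A := by
    rw [hA]
    unfold Mf
    rw [Finset.Icc_eq_empty (by omega : ¬ t + 1 + 1 ≤ t + 1),
      Finset.Icc_eq_empty (by omega : ¬ t + 1 ≤ t)]
    simp only [Finset.prod_empty, one_mul]
    rw [← Finset.Ico_add_one_right_eq_Icc (t+1) p, Finset.prod_eq_prod_Ico_succ_bot (by omega : t + 1 < p + 1),
      Finset.Ico_add_one_right_eq_Icc]
  have hcop : Nat.gcd B A = 1 := by
    have hc : Nat.Coprime A B := by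
      rw [hA]
      unfold Mf
      rw [Finset.Icc_eq_empty (by omega : ¬ t + 1 ≤ t), Finset.prod_empty, one_mul]
      exact Nat.Coprime.prod_left fun k hk => by
        rw [mem_Icc] at hk
        exact hab k (t+1) (by omega) hk.1 hk.2
    exact hc.symm
  set Sx := ∑ j ∈ Icc (t+1) p, x j * Mf p a b (t+1) j with hSx
  set Sy := ∑ j ∈ Icc (t+1) p, y j * Mf p a b (t+1) j with hSy
  have htail : ∀ z : ℕ → ℕ, ∑ j ∈ Icc (t+1) p, z j * Mf p a b t j
      = B * ∑ j ∈ Icc (t+1) p, z j * Mf p a b (t+1) j := by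
    intro z
    rw [Finset.mul_sum]
    refine Finset.sum_congr rfl fun j hj => ?_
    rw [hM j hj]; ring
  have E : x t * A + B * Sx = y t * A + B * Sy := by
    have h1 := hsplit x
    have h2 := hsplit y
    rw [h1, h2, htail x, htail y] at hsum
    exact hsum
  have hmod : x t ≡ y t [MOD B] := by
    have h1 : x t * A % B = y t * A % B := by
      rw [← Nat.add_mul_mod_self_left (x t * A) B Sx,
        ← Nat.add_mul_mod_self_left (y t * A) B Sy, E]
    exact Nat.ModEq.cancel_right_of_coprime hcop h1
  obtain ⟨q, hq⟩ := (Nat.modEq_iff_dvd' hle).mp hmod.symm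
  have hq' : x t - y t = q * B := by rw [hq, mul_comm]
  have hbound : q * b (t+1) ≤ x (t + 1 - 1) := by
    simp only [Nat.add_sub_cancel, ← hB]; omega
  have hchain := swapChain p a b (t+1) (by omega) (by omega) x q hbound
  set x' : ℕ → ℕ := fun j => if j = t then x j - q * B else
      if j = t + 1 then x j + q * a (t+1) else x j with hx'
  have hxx' : (fun j => if j = t + 1 - 1 then x j - q * b (t+1) else
      if j = t + 1 then x j + q * a (t+1) else x j) = x' := by
    funext j; simp only [Nat.add_sub_cancel, hx', hB]
  rw [hxx'] at hchain
  refine ⟨x', hchain, ?_, ?_, ?_⟩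
  · simp only [hx', if_pos rfl]; omega
  · intro j hj1 hj2; simp only [hx', if_neg hj1, if_neg hj2]
  · have h1 : ∀ j ∈ Icc (t+1) p, x' j * Mf p a b (t+1) j
        = x j * Mf p a b (t+1) j
          + (if j = t + 1 then q * a (t+1) * Mf p a b (t+1) (t+1) else 0) := by
      intro j hj
      rw [mem_Icc] at hj
      rcases eq_or_ne j (t+1) with rfl | hne
      · have hv : x' (t+1) = x (t+1) + q * a (t+1) := by
          simp only [hx', if_neg (by omega : t + 1 ≠ t), eq_self_iff_true, if_true]
        rw [hv, if_pos rfl]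
        ring
      · simp only [hx', if_neg (by omega : j ≠ t), if_neg hne, if_neg hne, add_zero]
    have hx'sum : ∑ j ∈ Icc (t+1) p, x' j * Mf p a b (t+1) j
        = Sx + q * a (t+1) * Mf p a b (t+1) (t+1) := by
      rw [Finset.sum_congr rfl h1, Finset.sum_add_distrib, ← hSx,
        Finset.sum_ite_eq' (Icc (t+1) p) (t+1)
          (fun _ => q * a (t+1) * Mf p a b (t+1) (t+1)),
        if_pos (by rw [mem_Icc]; omega)]
    rw [hx'sum]
    have hxt : x t = y t + q * B := by omega
    have e0 : (y t + q * B) * A + B * Sx = y t * A + B * Sy := by rw [← hxt]; exact E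
    have e0' : ((y t : ℤ) + (q : ℤ) * (B : ℤ)) * (A : ℤ) + (B : ℤ) * (Sx : ℤ)
        = (y t : ℤ) * (A : ℤ) + (B : ℤ) * (Sy : ℤ) := by exact_mod_cast e0
    have e1 : (B : ℤ) * ((q : ℤ) * A + Sx) = (B : ℤ) * Sy := by linear_combination e0'
    have e2 : (q : ℤ) * A + Sx = Sy :=
      mul_left_cancel₀ (by exact_mod_cast hBpos.ne') e1
    have k2 : (a (t+1) : ℤ) * ((Mf p a b (t+1) (t+1) : ℕ) : ℤ) = (A : ℤ) := by
      exact_mod_cast key2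
    have e3 : (Sx : ℤ) + (q : ℤ) * (a (t+1) : ℤ) * ((Mf p a b (t+1) (t+1) : ℕ) : ℤ)
        = (Sy : ℤ) := by linear_combination e2 + (q : ℤ) * k2
    exact_mod_cast e3

lemma mainLemma (p : ℕ) (a b : ℕ → ℕ)
    (ha : ∀ i, 1 ≤ i → i ≤ p → 2 ≤ a i ∧ a i < b i)
    (hab : ∀ i j, 1 ≤ j → j ≤ i → i ≤ p → Nat.gcd (a i) (b j) = 1) :
    ∀ d t, t + d = p → ∀ x y : ℕ → ℕ,
      (∀ j, j < t → x j = y j) → (∀ j, p < j → x j = y j) →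
      (∑ j ∈ Icc t p, x j * Mf p a b t j = ∑ j ∈ Icc t p, y j * Mf p a b t j) →
      ReflTransGen (Rsw p a b) x y := by
  intro d
  induction d with
  | zero =>
      intro t ht x y hlow hhigh hsum
      have htp : t = p := by omega
      have hIcc : Icc t p = {t} := by rw [htp]; exact Finset.Icc_self p
      have hMt : Mf p a b t t = 1 := by
        unfold Mf
        rw [Finset.Icc_eq_empty (by omega : ¬ t + 1 ≤ t), Finset.prod_empty, one_mul]
        refine Finset.prod_eq_one fun k hk => ?_
        rw [mem_Icc] at hk
        exact absurd hk (by omega)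
      have hsum' : x t = y t := by
        rw [hIcc, Finset.sum_singleton, Finset.sum_singleton, hMt,
          mul_one, mul_one] at hsum
        exact hsum
      have hxy : x = y := by
        funext j
        rcases lt_trichotomy j t with h | h | h
        · exact hlow j h
        · rw [h]; exact hsum'
        · exact hhigh j (by omega)
      rw [hxy]
  | succ d IH =>
      intro t ht x y hlow hhigh hsum
      have htp : t < p := by omega
      rcases le_total (y t) (x t) with h | h
      · obtain ⟨x', hc, hxt, hoth, hs⟩ := descend p a b ha hab t htp x y h hsum
        refine hc.trans (IH (t+1) (by omega) x' y ?_ ?_ hs)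
        · intro j hj
          rcases eq_or_ne j t with rfl | hne
          · exact hxt
          · rw [hoth j hne (by omega), hlow j (by omega)]
        · intro j hj
          rw [hoth j (by omega) (by omega)]
          exact hhigh j hj
      · obtain ⟨y', hc, hyt, hoth, hs⟩ := descend p a b ha hab t htp y x h hsum.symm
        refine (IH (t+1) (by omega) x y' ?_ ?_ hs.symm).trans
          (@Std.Symm.symm _ _ (@Relation.ReflTransGen.symmetric _ _ ⟨fun u v h => Rsw_symm p a b h⟩) _ _ hc)
        · intro j hj
          rcases eq_or_ne j t with rfl | hne
          · exact hyt.symm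
          · rw [hoth j hne (by omega), hlow j (by omega)]
        · intro j hj
          rw [hoth j (by omega) (by omega)]
          exact hhigh j hj

theorem stmt12 (p : ℕ) (hp : 1 ≤ p) (a b : ℕ → ℕ)
    (ha : ∀ i, 1 ≤ i → i ≤ p → 2 ≤ a i ∧ a i < b i)
    (hab : ∀ i j, 1 ≤ j → j ≤ i → i ≤ p → Nat.gcd (a i) (b j) = 1)
    (n : ℕ → ℕ)
    (hn : ∀ i, i ≤ p → n i = (∏ j ∈ Finset.Icc 1 i, b j) * ∏ j ∈ Finset.Icc (i+1) p, a j)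
    (x y : ℕ → ℕ) (hxs : ∀ j, p < j → x j = 0) (hys : ∀ j, p < j → y j = 0)
    (hxy : ∑ j ∈ Finset.range (p+1), x j * n j = ∑ j ∈ Finset.range (p+1), y j * n j) :
    Relation.ReflTransGen (fun u v : ℕ → ℕ => ∃ i, 1 ≤ i ∧ i ≤ p ∧
      ((fun j => u j + if j = i - 1 then b i else 0) =
        (fun j => v j + if j = i then a i else 0) ∨
       (fun j => u j + if j = i then a i else 0) =
        (fun j => v j + if j = i - 1 then b i else 0))) x y := by
  have hset : Finset.Icc 0 p = Finset.range (p+1) := by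
    rw [Finset.range_eq_Ico, Finset.Ico_add_one_right_eq_Icc]
  have hMn : ∀ z : ℕ → ℕ, ∑ j ∈ Icc 0 p, z j * Mf p a b 0 j
      = ∑ j ∈ Finset.range (p+1), z j * n j := by
    intro z
    rw [hset]
    refine Finset.sum_congr rfl fun j hj => ?_
    rw [Finset.mem_range] at hj
    rw [hn j (by omega)]
    rfl
  exact mainLemma p a b ha hab p 0 (by omega) x y (fun j hj => by omega)
    (fun j hj => by rw [hxs j hj, hys j hj]) (by rw [hMn x, hMn y, hxy])
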